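/- For every real s > -1, Γ(1+s) = exp(-γs + ∫_{-∞}^0 (e^{sx} - 1 - sx) dx/(|x|(e^{|x|}-1))), where γ is Euler's constant. In particular the integral converges absolutely. -/

import Mathlib

open MeasureTheory Real Set Filter Topology

lemma integral_exp_neg_mul_Ioi {c : ℝ} (hc : 0 < c) :
    ∫ t in Ioi (0:ℝ), exp (-(c*t)) = 1/c := by
  have := integral_comp_mul_left_Ioi (fun x => exp (-x)) 0 hc
  simp only [mul_zero, integral_exp_neg_Ioi, neg_zero, exp_zero, smul_eq_mul, mul_one] at this
  rw [show (fun t => exp (-(c*t))) = fun t => exp (-(c*t)) from rfl]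
  simpa [one_div] using this

lemma integrableOn_exp_neg_mul {c : ℝ} (hc : 0 < c) :
    IntegrableOn (fun t => exp (-(c*t))) (Ioi (0:ℝ)) := by
  simpa [neg_mul] using exp_neg_integrableOn_Ioi 0 hc


lemma exp_interval_int {t a b : ℝ} (ht : 0 < t) :
    ∫ u in a..b, exp (-(t*u)) = (exp (-(t*a)) - exp (-(t*b)))/t := by
  have ht' : t ≠ 0 := ne_of_gt ht
  have h : (fun u : ℝ => exp (-(t*u))) = fun u => exp ((-t)*u) := by ext u; ring_nf
  rw [h]
  have := intervalIntegral.integral_comp_mul_left (fun x => exp x) (c := -t) (a := a) (b := b)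
    (by linarith)
  rw [this, integral_exp, smul_eq_mul, inv_neg]
  simp only [neg_mul]
  ring

set_option maxHeartbeats 1000000 in
lemma frullani {a b : ℝ} (ha : 0 < a) (hab : a ≤ b) :
    IntegrableOn (fun t => (exp (-(a*t)) - exp (-(b*t)))/t) (Ioi (0:ℝ)) ∧
    ∫ t in Ioi (0:ℝ), (exp (-(a*t)) - exp (-(b*t)))/t = log b - log a := by
  have hb : 0 < b := lt_of_lt_of_le ha hab
  have hprod : (volume.restrict (Ioi (0:ℝ))).prod (volume.restrict (Ioc a b))
      = (volume.prod volume).restrict ((Ioi (0:ℝ)) ×ˢ (Ioc a b)) :=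
    Measure.prod_restrict _ _
  have hmeas : AEStronglyMeasurable (fun z : ℝ × ℝ => exp (-(z.1 * z.2)))
      ((volume.restrict (Ioi (0:ℝ))).prod (volume.restrict (Ioc a b))) := by
    apply Continuous.aestronglyMeasurable
    exact (continuous_fst.mul continuous_snd).neg.rexp
  have hdom : Integrable (fun z : ℝ × ℝ => exp (-(a * z.1)) * 1)
      ((volume.restrict (Ioi (0:ℝ))).prod (volume.restrict (Ioc a b))) :=
    Integrable.mul_prod (f := fun t => exp (-(a*t))) (g := fun _ => (1:ℝ))
      (integrableOn_exp_neg_mul ha) (integrableOn_const measure_Ioc_lt_top.ne)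
  have hae : ∀ᵐ z ∂((volume.restrict (Ioi (0:ℝ))).prod (volume.restrict (Ioc a b))),
      z ∈ (Ioi (0:ℝ)) ×ˢ (Ioc a b) := by
    rw [hprod]; exact ae_restrict_mem (measurableSet_Ioi.prod measurableSet_Ioc)
  have h1 : Integrable (fun z : ℝ × ℝ => exp (-(z.1 * z.2)))
      ((volume.restrict (Ioi (0:ℝ))).prod (volume.restrict (Ioc a b))) := by
    apply Integrable.mono hdom hmeas
    filter_upwards [hae] with z hz
    obtain ⟨hz1, hz2⟩ := hz
    simp only [norm_mul, Real.norm_eq_abs, abs_exp, abs_one, mul_one]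
    apply exp_le_exp.2
    have : a * z.1 ≤ z.1 * z.2 := by
      rw [mul_comm a z.1]
      exact mul_le_mul_of_nonneg_left hz2.1.le (le_of_lt hz1)
    linarith
  have hcongr : (fun t => (exp (-(a*t)) - exp (-(b*t)))/t)
      =ᵐ[volume.restrict (Ioi (0:ℝ))]
      (fun t => ∫ u in Ioc a b, exp (-(t * u))) := by
    filter_upwards [ae_restrict_mem measurableSet_Ioi] with t ht
    have h2 : (∫ u in Ioc a b, exp (-(t * u))) = ∫ u in a..b, exp (-(t*u)) :=
      (intervalIntegral.integral_of_le hab).symm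
    rw [h2, exp_interval_int ht, mul_comm a t, mul_comm b t]
  have hint : IntegrableOn (fun t => (exp (-(a*t)) - exp (-(b*t)))/t) (Ioi (0:ℝ)) :=
    (h1.integral_prod_left).congr hcongr.symm
  refine ⟨hint, ?_⟩
  have hswap := integral_integral_swap (f := fun t u => exp (-(t * u)))
    (μ := volume.restrict (Ioi (0:ℝ))) (ν := volume.restrict (Ioc a b)) h1
  calc ∫ t in Ioi (0:ℝ), (exp (-(a*t)) - exp (-(b*t)))/t
      = ∫ t in Ioi (0:ℝ), (∫ u in Ioc a b, exp (-(t * u))) := integral_congr_ae hcongr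
    _ = ∫ u in Ioc a b, (∫ t in Ioi (0:ℝ), exp (-(t * u))) := hswap
    _ = ∫ u in Ioc a b, 1/u := by
        apply integral_congr_ae
        filter_upwards [ae_restrict_mem measurableSet_Ioc] with u hu
        have hu0 : 0 < u := ha.trans hu.1
        have h3 : (fun t => exp (-(t * u))) = fun t => exp (-(u * t)) := by
          ext t; rw [mul_comm]
        rw [h3, integral_exp_neg_mul_Ioi hu0]
    _ = ∫ u in a..b, 1/u := (intervalIntegral.integral_of_le hab).symm
    _ = log b - log a := by rw [integral_one_div_of_pos ha hb, log_div (ne_of_gt hb) (ne_of_gt ha)]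

lemma term_integral {s c : ℝ} (hc : 0 < c) (hcs : 0 < c + s) :
    IntegrableOn (fun t => (exp (-(s*t)) - 1 + s*t) * exp (-(c*t)) / t) (Ioi (0:ℝ)) ∧
    ∫ t in Ioi (0:ℝ), (exp (-(s*t)) - 1 + s*t) * exp (-(c*t)) / t = s/c - log (1 + s/c) := by
  have hF1 : IntegrableOn (fun t => (exp (-((c+s)*t)) - exp (-(c*t)))/t) (Ioi (0:ℝ)) ∧
      ∫ t in Ioi (0:ℝ), (exp (-((c+s)*t)) - exp (-(c*t)))/t = log c - log (c+s) := by
    rcases le_total 0 s with h | h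
    · have hf := frullani hc (show c ≤ c + s by linarith)
      constructor
      · exact IntegrableOn.congr_fun hf.1.neg
          (fun t _ => by simp only [Pi.neg_apply]; ring) measurableSet_Ioi
      · have heq : ∀ t ∈ Ioi (0:ℝ), (exp (-((c+s)*t)) - exp (-(c*t)))/t
            = -((exp (-(c*t)) - exp (-((c+s)*t)))/t) := by intro t _; ring
        rw [setIntegral_congr_fun measurableSet_Ioi heq, integral_neg, hf.2]
        ring
    · have hf := frullani hcs (show c + s ≤ c by linarith)
      exact ⟨hf.1, hf.2⟩
  have hF2 : IntegrableOn (fun t => s * exp (-(c*t))) (Ioi (0:ℝ)) ∧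
      ∫ t in Ioi (0:ℝ), s * exp (-(c*t)) = s/c := by
    constructor
    · exact (integrableOn_exp_neg_mul hc).const_mul s
    · rw [integral_const_mul, integral_exp_neg_mul_Ioi hc]
      ring
  have key : ∀ t ∈ Ioi (0:ℝ), (exp (-(s*t)) - 1 + s*t) * exp (-(c*t)) / t
      = (exp (-((c+s)*t)) - exp (-(c*t)))/t + s * exp (-(c*t)) := by
    intro t ht
    have ht0 : t ≠ 0 := ne_of_gt ht
    have hexp : exp (-(s*t)) * exp (-(c*t)) = exp (-((c+s)*t)) := by
      rw [← exp_add]; ring_nf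
    field_simp
    rw [show t * (c+s) = (c+s)*t by ring, show t*c = c*t by ring, ← hexp]
    ring
  have hlog : log c - log (c+s) = - log (1 + s/c) := by
    have : 1 + s/c = (c+s)/c := by field_simp
    rw [this, log_div (ne_of_gt hcs) (ne_of_gt hc)]
    ring
  constructor
  · exact IntegrableOn.congr_fun (hF1.1.add hF2.1) (fun t ht => (key t ht).symm) measurableSet_Ioi
  · rw [setIntegral_congr_fun measurableSet_Ioi key, integral_add hF1.1 hF2.1, hF1.2, hF2.2, hlog]
    ring

lemma one_add_div_pos {s : ℝ} (hs : -1 < s) (k : ℕ) : 0 < 1 + s/((k:ℝ)+1) := by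
  have hk : (0:ℝ) < (k:ℝ)+1 := by positivity
  have : -1 < s/((k:ℝ)+1) := by
    rw [lt_div_iff₀ hk]
    nlinarith [Nat.cast_nonneg (α := ℝ) k]
  linarith

lemma a_nonneg {s : ℝ} (hs : -1 < s) (k : ℕ) :
    0 ≤ s/((k:ℝ)+1) - log (1 + s/((k:ℝ)+1)) := by
  have h := Real.log_le_sub_one_of_pos (one_add_div_pos hs k)
  linarith

lemma summable_a {s : ℝ} (hs : -1 < s) :
    Summable (fun k : ℕ => s/((k:ℝ)+1) - log (1 + s/((k:ℝ)+1))) := by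
  have hsum : Summable (fun k : ℕ => 2 * s^2 * (1/((k:ℝ)+1)^2)) := by
    apply Summable.mul_left
    have := Real.summable_one_div_nat_pow (p := 2) |>.2 (by norm_num)
    exact_mod_cast (summable_nat_add_iff 1).2 this
  apply Summable.of_norm_bounded_eventually_nat hsum
  filter_upwards [eventually_ge_atTop (Nat.ceil (2*|s|))] with k hk
  set u := s/((k:ℝ)+1) with hu
  have hk1 : (0:ℝ) < (k:ℝ)+1 := by positivity
  have hks : 2*|s| ≤ (k:ℝ)+1 := by
    calc 2*|s| ≤ (Nat.ceil (2*|s|) : ℝ) := Nat.le_ceil _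
    _ ≤ (k:ℝ) := by exact_mod_cast hk
    _ ≤ (k:ℝ)+1 := by linarith
  have hu2 : |u| ≤ 1/2 := by
    rw [hu, abs_div, abs_of_pos hk1, div_le_iff₀ hk1]
    linarith [abs_nonneg s]
  have h1 := Real.abs_log_sub_add_sum_range_le (x := -u) (by rw [abs_neg]; linarith) 1
  simp only [Finset.sum_range_one, pow_one, Nat.cast_zero, zero_add, div_one, sub_neg_eq_add] at h1
  have h2 : |(-u) + log (1 + u)| ≤ |(-u)|^2 / (1 - |(-u)|) := by
    convert h1 using 3 <;> ring_nf
  rw [abs_neg] at h2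
  have h3 : |u|^2 / (1 - |u|) ≤ 2 * u^2 := by
    rw [div_le_iff₀ (by linarith)]
    have : |u|^2 = u^2 := sq_abs u
    nlinarith [abs_nonneg u, sq_nonneg u]
  have h4 : |u - log (1+u)| = |(-u) + log (1+u)| := by
    rw [← abs_neg]; congr 1; ring
  calc ‖u - log (1+u)‖ = |(-u) + log (1+u)| := h4
    _ ≤ 2 * u^2 := le_trans h2 h3
    _ ≤ 2 * s^2 * (1/((k:ℝ)+1)^2) := by rw [hu]; apply le_of_eq; rw [div_pow]; ring

lemma hasSum_pointwise {s t : ℝ} (ht : 0 < t) :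
    HasSum (fun k : ℕ => (exp (-(s*t)) - 1 + s*t) * exp (-(((k:ℝ)+1)*t)) / t)
      ((exp (-(s*t)) - 1 + s*t) / (t * (exp t - 1))) := by
  have hr0 : (0:ℝ) ≤ exp (-t) := (exp_pos _).le
  have hr1 : exp (-t) < 1 := exp_lt_one_iff.2 (by linarith)
  have hgeo := (hasSum_geometric_of_lt_one hr0 hr1).mul_left
    ((exp (-(s*t)) - 1 + s*t) / t * exp (-t))
  have het : (1:ℝ) < exp t := by
    rw [← exp_zero]; exact exp_lt_exp.2 ht
  have hfun : (fun k : ℕ => (exp (-(s*t)) - 1 + s*t) / t * exp (-t) * exp (-t) ^ k)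
      = fun k : ℕ => (exp (-(s*t)) - 1 + s*t) * exp (-(((k:ℝ)+1)*t)) / t := by
    ext k
    have : exp (-(((k:ℝ)+1)*t)) = exp (-t) * exp (-t) ^ k := by
      rw [← Real.exp_nat_mul, ← exp_add]
      congr 1
      push_cast
      ring
    rw [this]
    ring
  rw [hfun] at hgeo
  convert hgeo using 1
  · rfl
  have h1 : (1:ℝ) - exp (-t) ≠ 0 := by
    have := exp_lt_one_iff.2 (show -t < 0 by linarith)
    linarith
  have h2 : exp t - 1 ≠ 0 := by linarith
  have h3 : exp t ≠ 0 := (exp_pos t).ne'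
  have hrw : exp (-t) = (exp t)⁻¹ := exp_neg t
  rw [hrw]
  field_simp

lemma integral_g {s : ℝ} (hs : -1 < s) :
    IntegrableOn (fun t => (exp (-(s*t)) - 1 + s*t) / (t * (exp t - 1))) (Ioi (0:ℝ)) ∧
    ∫ t in Ioi (0:ℝ), (exp (-(s*t)) - 1 + s*t) / (t * (exp t - 1))
      = ∑' k : ℕ, (s/((k:ℝ)+1) - log (1 + s/((k:ℝ)+1))) := by
  have hFint : ∀ k : ℕ, IntegrableOn
      (fun t => (exp (-(s*t)) - 1 + s*t) * exp (-(((k:ℝ)+1)*t)) / t) (Ioi (0:ℝ)) :=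
    fun k => (term_integral (by positivity)
      (show (0:ℝ) < (k:ℝ)+1+s by nlinarith [Nat.cast_nonneg (α := ℝ) k])).1
  have hFval : ∀ k : ℕ, ∫ t in Ioi (0:ℝ), (exp (-(s*t)) - 1 + s*t) * exp (-(((k:ℝ)+1)*t)) / t
      = s/((k:ℝ)+1) - log (1 + s/((k:ℝ)+1)) :=
    fun k => (term_integral (by positivity)
      (show (0:ℝ) < (k:ℝ)+1+s by nlinarith [Nat.cast_nonneg (α := ℝ) k])).2
  have hCnn : ∀ t : ℝ, 0 ≤ exp (-(s*t)) - 1 + s*t := by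
    intro t
    nlinarith [add_one_le_exp (-(s*t))]
  have hFnn : ∀ (k : ℕ) t, t ∈ Ioi (0:ℝ) →
      0 ≤ (exp (-(s*t)) - 1 + s*t) * exp (-(((k:ℝ)+1)*t)) / t := by
    intro k t ht
    have := hCnn t
    have h2 := (exp_pos (-(((k:ℝ)+1)*t))).le
    exact div_nonneg (mul_nonneg this h2) (le_of_lt ht)
  have hgnn : ∀ t, t ∈ Ioi (0:ℝ) → 0 ≤ (exp (-(s*t)) - 1 + s*t) / (t * (exp t - 1)) := by
    intro t ht
    have h1 := hCnn t
    have h2 : (0:ℝ) < exp t - 1 := by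
      have : (1:ℝ) < exp t := by rw [← exp_zero]; exact exp_lt_exp.2 ht
      linarith
    have ht' : (0:ℝ) < t := ht
    positivity
  have hae : ∀ᵐ t ∂(volume.restrict (Ioi (0:ℝ))), t ∈ Ioi (0:ℝ) :=
    ae_restrict_mem measurableSet_Ioi
  have hmeasF : ∀ k : ℕ, Measurable
      (fun t : ℝ => (exp (-(s*t)) - 1 + s*t) * exp (-(((k:ℝ)+1)*t)) / t) := by
    intro k; fun_prop
  have hmeasg : Measurable (fun t : ℝ => (exp (-(s*t)) - 1 + s*t) / (t * (exp t - 1))) := by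
    fun_prop
  -- finite lintegral
  have hlin : ∫⁻ t in Ioi (0:ℝ), ENNReal.ofReal ((exp (-(s*t)) - 1 + s*t) / (t * (exp t - 1)))
      = ENNReal.ofReal (∑' k : ℕ, (s/((k:ℝ)+1) - log (1 + s/((k:ℝ)+1)))) := by
    calc ∫⁻ t in Ioi (0:ℝ), ENNReal.ofReal ((exp (-(s*t)) - 1 + s*t) / (t * (exp t - 1)))
        = ∫⁻ t in Ioi (0:ℝ),
            ∑' k : ℕ, ENNReal.ofReal ((exp (-(s*t)) - 1 + s*t) * exp (-(((k:ℝ)+1)*t)) / t) := by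
          apply lintegral_congr_ae
          filter_upwards [hae] with t ht
          rw [← (hasSum_pointwise ht).tsum_eq]
          exact ENNReal.ofReal_tsum_of_nonneg (fun k => hFnn k t ht) (hasSum_pointwise ht).summable
      _ = ∑' k : ℕ, ∫⁻ t in Ioi (0:ℝ),
            ENNReal.ofReal ((exp (-(s*t)) - 1 + s*t) * exp (-(((k:ℝ)+1)*t)) / t) :=
          lintegral_tsum (fun k => ((hmeasF k).ennreal_ofReal).aemeasurable)
      _ = ∑' k : ℕ, ENNReal.ofReal (s/((k:ℝ)+1) - log (1 + s/((k:ℝ)+1))) := by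
          congr 1
          ext k
          rw [← hFval k]
          refine (ofReal_integral_eq_lintegral_ofReal (hFint k) ?_).symm
          filter_upwards [hae] with t ht
          exact hFnn k t ht
      _ = ENNReal.ofReal (∑' k : ℕ, (s/((k:ℝ)+1) - log (1 + s/((k:ℝ)+1)))) :=
          (ENNReal.ofReal_tsum_of_nonneg (a_nonneg hs) (summable_a hs)).symm
  have hgnn_ae : 0 ≤ᵐ[volume.restrict (Ioi (0:ℝ))]
      (fun t => (exp (-(s*t)) - 1 + s*t) / (t * (exp t - 1))) := by
    filter_upwards [hae] with t ht; exact hgnn t ht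
  have hint : IntegrableOn (fun t => (exp (-(s*t)) - 1 + s*t) / (t * (exp t - 1))) (Ioi (0:ℝ)) := by
    refine ⟨hmeasg.aestronglyMeasurable, ?_⟩
    rw [hasFiniteIntegral_iff_ofReal hgnn_ae, hlin]
    exact ENNReal.ofReal_lt_top
  refine ⟨hint, ?_⟩
  have hnorm : (fun k : ℕ => ∫ t in Ioi (0:ℝ),
      ‖(exp (-(s*t)) - 1 + s*t) * exp (-(((k:ℝ)+1)*t)) / t‖)
      = fun k : ℕ => s/((k:ℝ)+1) - log (1 + s/((k:ℝ)+1)) := by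
    ext k
    rw [← hFval k]
    apply integral_congr_ae
    filter_upwards [hae] with t ht
    exact Real.norm_of_nonneg (hFnn k t ht)
  have hswap := integral_tsum_of_summable_integral_norm
    (F := fun (k : ℕ) (t : ℝ) => (exp (-(s*t)) - 1 + s*t) * exp (-(((k:ℝ)+1)*t)) / t)
    (μ := volume.restrict (Ioi (0:ℝ))) hFint (by rw [hnorm]; exact summable_a hs)
  calc ∫ t in Ioi (0:ℝ), (exp (-(s*t)) - 1 + s*t) / (t * (exp t - 1))
      = ∫ t in Ioi (0:ℝ),
          ∑' k : ℕ, (exp (-(s*t)) - 1 + s*t) * exp (-(((k:ℝ)+1)*t)) / t := by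
        apply integral_congr_ae
        filter_upwards [hae] with t ht
        exact ((hasSum_pointwise ht).tsum_eq).symm
    _ = ∑' k : ℕ, ∫ t in Ioi (0:ℝ),
          (exp (-(s*t)) - 1 + s*t) * exp (-(((k:ℝ)+1)*t)) / t := hswap.symm
    _ = ∑' k : ℕ, (s/((k:ℝ)+1) - log (1 + s/((k:ℝ)+1))) := by
        congr 1; ext k; exact hFval k

lemma logGamma_eq {s : ℝ} (hs : -1 < s) :
    log (Real.Gamma (1+s)) = -(Real.eulerMascheroniConstant) * s
      + ∑' k : ℕ, (s/((k:ℝ)+1) - log (1 + s/((k:ℝ)+1))) := by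
  have h1s : (0:ℝ) < 1 + s := by linarith
  have hΓ : 0 < Real.Gamma (1+s) := Real.Gamma_pos_of_pos h1s
  have hG := Real.GammaSeq_tendsto_Gamma (1+s)
  have hlog : Tendsto (fun n => log (Real.GammaSeq (1+s) n)) atTop
      (𝓝 (log (Real.Gamma (1+s)))) :=
    ((Real.continuousAt_log hΓ.ne').tendsto).comp hG
  -- explicit form of log GammaSeq for n ≥ 1
  have heq : ∀ n : ℕ, 1 ≤ n → log (Real.GammaSeq (1+s) n)
      = s*(log n - ∑ j ∈ Finset.range n, (1:ℝ)/((j:ℝ)+1))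
        + (∑ j ∈ Finset.range n, (s/((j:ℝ)+1) - log (1 + s/((j:ℝ)+1))))
        + (log n - log ((n:ℝ)+(1+s))) := by
    intro n hn
    have hn0 : (0:ℝ) < n := by exact_mod_cast hn
    have hterm : ∀ j : ℕ, (0:ℝ) < 1 + s + (j:ℝ) := by
      intro j
      have : (0:ℝ) ≤ (j:ℝ) := Nat.cast_nonneg j
      linarith
    have hprod : (0:ℝ) < ∏ j ∈ Finset.range (n+1), ((1:ℝ) + s + (j:ℕ)) :=
      Finset.prod_pos (fun j _ => hterm j)
    have hnum : (0:ℝ) < (n:ℝ) ^ ((1:ℝ)+s) * (n.factorial : ℝ) := by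
      have h1 : (0:ℝ) < (n:ℝ) ^ ((1:ℝ)+s) := rpow_pos_of_pos hn0 _
      have h2 : (0:ℝ) < (n.factorial : ℝ) := by exact_mod_cast Nat.factorial_pos n
      positivity
    rw [Real.GammaSeq, log_div hnum.ne' hprod.ne',
        log_mul (rpow_pos_of_pos hn0 _).ne' (by exact_mod_cast (Nat.factorial_pos n).ne'),
        log_rpow hn0]
    have hfac : (n.factorial : ℝ) = ∏ j ∈ Finset.range n, ((j:ℝ)+1) := by
      rw [← Finset.prod_range_add_one_eq_factorial]
      push_cast
      rfl
    rw [hfac, Real.log_prod (fun j _ => by positivity),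
        Real.log_prod (fun j _ => (hterm j).ne')]
    rw [Finset.sum_range_succ]
    have hsplit : ∀ j ∈ Finset.range n, log ((1:ℝ) + s + (j:ℕ))
        = log ((j:ℝ)+1) + log (1 + s/((j:ℝ)+1)) := by
      intro j _
      have hj1 : (0:ℝ) < (j:ℝ)+1 := by positivity
      have : (1:ℝ) + s + (j:ℕ) = ((j:ℝ)+1) * (1 + s/((j:ℝ)+1)) := by
        field_simp
        ring
      rw [this, log_mul hj1.ne' (one_add_div_pos hs j).ne']
    rw [Finset.sum_congr rfl hsplit, Finset.sum_add_distrib]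
    have hHsum : ∑ j ∈ Finset.range n, s/((j:ℝ)+1)
        = s * ∑ j ∈ Finset.range n, (1:ℝ)/((j:ℝ)+1) := by
      rw [Finset.mul_sum]
      apply Finset.sum_congr rfl
      intro j _
      ring
    rw [Finset.sum_sub_distrib, hHsum]
    have : (1:ℝ) + s + (n:ℕ) = (n:ℝ) + (1+s) := by push_cast; ring
    rw [this]
    ring
  -- limit of the explicit form
  have T1 : Tendsto (fun n : ℕ => s*(log n - ∑ j ∈ Finset.range n, (1:ℝ)/((j:ℝ)+1))) atTop
      (𝓝 (-(Real.eulerMascheroniConstant) * s)) := by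
    have hH : ∀ n : ℕ, ((harmonic n : ℚ) : ℝ) = ∑ j ∈ Finset.range n, (1:ℝ)/((j:ℝ)+1) := by
      intro n
      rw [harmonic]
      push_cast
      apply Finset.sum_congr rfl
      intro j _
      rw [one_div]
    have := (Real.tendsto_harmonic_sub_log).const_mul (-s)
    have h2 : (fun n : ℕ => -s * (((harmonic n : ℚ) : ℝ) - log n))
        = fun n : ℕ => s*(log n - ∑ j ∈ Finset.range n, (1:ℝ)/((j:ℝ)+1)) := by
      ext n
      rw [← hH n]
      ring
    rw [h2] at this
    convert this using 2
    ring
  have T2 : Tendsto (fun n : ℕ => ∑ j ∈ Finset.range n, (s/((j:ℝ)+1) - log (1 + s/((j:ℝ)+1))))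
      atTop (𝓝 (∑' k : ℕ, (s/((k:ℝ)+1) - log (1 + s/((k:ℝ)+1))))) :=
    (summable_a hs).hasSum.tendsto_sum_nat
  have T3 : Tendsto (fun n : ℕ => log n - log ((n:ℝ)+(1+s))) atTop (𝓝 0) := by
    have h0 := tendsto_natCast_div_add_atTop (𝕜 := ℝ) (1+s)
    have h1 : Tendsto (fun n : ℕ => log ((n:ℝ)/((n:ℝ)+(1+s)))) atTop (𝓝 0) := by
      have := (Real.continuousAt_log (one_ne_zero)).tendsto.comp h0
      simpa [Function.comp_def] using this
    apply h1.congr'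
    filter_upwards [eventually_ge_atTop 1] with n hn
    have hn0 : (0:ℝ) < n := by exact_mod_cast hn
    have hns : (0:ℝ) < (n:ℝ)+(1+s) := by linarith
    rw [log_div hn0.ne' hns.ne']
  have Tall : Tendsto (fun n : ℕ => log (Real.GammaSeq (1+s) n)) atTop
      (𝓝 (-(Real.eulerMascheroniConstant) * s
        + ∑' k : ℕ, (s/((k:ℝ)+1) - log (1 + s/((k:ℝ)+1))))) := by
    have := (T1.add T2).add T3
    rw [add_zero] at this
    apply this.congr'
    filter_upwards [eventually_ge_atTop 1] with n hn
    exact (heq n hn).symm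
  exact tendsto_nhds_unique hlog Tall

theorem malmsten_formula (s : ℝ) (hs : -1 < s) :
    IntegrableOn
      (fun x : ℝ => (Real.exp (s * x) - 1 - s * x) / (|x| * (Real.exp |x| - 1)))
      (Set.Iio (0:ℝ)) ∧
    Real.Gamma (1 + s) =
      Real.exp (-(Real.eulerMascheroniConstant) * s +
        ∫ x in Set.Iio (0:ℝ),
          (Real.exp (s * x) - 1 - s * x) / (|x| * (Real.exp |x| - 1))) := by
  obtain ⟨hint, hval⟩ := integral_g hs
  -- the integrand on Iio 0 agrees with g ∘ neg
  have hEq : ∀ x ∈ Iio (0:ℝ), (Real.exp (s * x) - 1 - s * x) / (|x| * (Real.exp |x| - 1))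
      = (exp (-(s * (-x))) - 1 + s * (-x)) / ((-x) * (exp (-x) - 1)) := by
    intro x hx
    have hx0 : x < 0 := hx
    rw [abs_of_neg hx0]
    ring_nf
  have hcompInt : IntegrableOn
      (fun x : ℝ => (exp (-(s * (-x))) - 1 + s * (-x)) / ((-x) * (exp (-x) - 1)))
      (Iio (0:ℝ)) := by
    have h2 := (MeasurePreserving.integrableOn_comp_preimage
      (Measure.measurePreserving_neg (volume : Measure ℝ))
      (Homeomorph.neg ℝ).measurableEmbedding).2 hint
    have hpre : (fun x : ℝ => -x) ⁻¹' (Ioi (0:ℝ)) = Iio (0:ℝ) := by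
      ext x; simp
    rw [hpre] at h2
    exact h2
  have hIntf : IntegrableOn
      (fun x : ℝ => (Real.exp (s * x) - 1 - s * x) / (|x| * (Real.exp |x| - 1)))
      (Set.Iio (0:ℝ)) :=
    hcompInt.congr_fun (fun x hx => (hEq x hx).symm) measurableSet_Iio
  refine ⟨hIntf, ?_⟩
  have hI : (∫ x in Set.Iio (0:ℝ),
      (Real.exp (s * x) - 1 - s * x) / (|x| * (Real.exp |x| - 1)))
      = ∫ t in Ioi (0:ℝ), (exp (-(s*t)) - 1 + s*t) / (t * (exp t - 1)) := by
    rw [setIntegral_congr_fun measurableSet_Iio hEq]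
    have h1 : (∫ x in Iio (0:ℝ), (exp (-(s * (-x))) - 1 + s * (-x)) / ((-x) * (exp (-x) - 1)))
        = ∫ x in Iic (0:ℝ), (exp (-(s * (-x))) - 1 + s * (-x)) / ((-x) * (exp (-x) - 1)) :=
      setIntegral_congr_set Iio_ae_eq_Iic
    rw [h1]
    have h2 := integral_comp_neg_Iic (0:ℝ)
      (fun t => (exp (-(s * t)) - 1 + s * t) / (t * (exp t - 1)))
    rw [neg_zero] at h2
    exact h2
  rw [hI, hval, ← logGamma_eq hs]
  rw [Real.exp_log (Real.Gamma_pos_of_pos (by linarith))]
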